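/- arXiv:1209.4597 — 2 statements merged into one kernel-verified Lean document; each statement's English description precedes it below -/
import Mathlib

section
/- Let V be a k-vector space with basis {v_j}_{j≥1} and θ₂ the linear operator defined by: θ₂(v₁) = v₁ − v₃; θ₂(v₂) = v₁ − v₂ − v₃ + v₄ − v₅; θ₂(v₃) = v₁ − v₂ + v₄; θ₂(v_{4k}) = v_{4k+2} for k ≥ 1; θ₂(v_{4k+1}) = −v₁ + v₂ + Σ_{j=2}^{(4k+2)/2} (−1)^{j−1} v_{2j} for k ≥ 1; θ₂(v_{4k+2}) = 0 for k ≥ 1; θ₂(v_{4k+3}) = v₁ − v₂ + [Σ_{j=2}^{(4k+4)/2} (−1)^{j} v_{2j}] − v_{4k+5} for k ≥ 1. Then θ₂ is nilpotent: θ₂⁶ = 0. -/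
/-- The standard basis `v j = single j 1` of the space with countable basis `{v_j}_{j ≥ 1}`. -/
noncomputable def v (k : Type*) [Field k] (j : ℕ+) : ℕ+ →₀ k := Finsupp.single j 1

private lemma pnat_decomp (a : ℕ+) : a = 1 ∨ a = 2 ∨ a = 3 ∨ ∃ m : ℕ+,
    a = 4*m ∨ a = 4*m+1 ∨ a = 4*m+2 ∨ a = 4*m+3 := by
  obtain ⟨n, hn⟩ := a
  rcases Nat.lt_or_ge n 4 with h | h
  · interval_cases n
    · exact Or.inl rfl
    · exact Or.inr (Or.inl rfl)
    · exact Or.inr (Or.inr (Or.inl rfl))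
  · refine Or.inr (Or.inr (Or.inr ⟨⟨n/4, by omega⟩, ?_⟩))
    have h4 : n % 4 < 4 := Nat.mod_lt _ (by norm_num)
    have heq : n = 4 * (n/4) + n % 4 := by omega
    interval_cases hi : n % 4
    · left; apply PNat.coe_injective; change n = 4*(n/4); omega
    · right; left; apply PNat.coe_injective; change n = 4*(n/4)+1; omega
    · right; right; left; apply PNat.coe_injective; change n = 4*(n/4)+2; omega
    · right; right; right; apply PNat.coe_injective; change n = 4*(n/4)+3; omega

private lemma pnat_parity (j : ℕ+) (h : 2 ≤ j) : ∃ t : ℕ+, j = 2*t ∨ j = 2*t+1 := by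
  obtain ⟨n, hn⟩ := j
  have h2 : 2 ≤ n := h
  refine ⟨⟨n/2, by omega⟩, ?_⟩
  rcases Nat.even_or_odd n with he | ho
  · rw [Nat.even_iff] at he
    left; apply PNat.coe_injective; change n = 2*(n/2); omega
  · rw [Nat.odd_iff] at ho
    right; apply PNat.coe_injective; change n = 2*(n/2)+1; omega

set_option maxHeartbeats 2000000 in
theorem theta2_nilpotent_of_order_six {k : Type*} [Field k]
    (θ₂ : (ℕ+ →₀ k) →ₗ[k] (ℕ+ →₀ k))
    (h1 : θ₂ (v k 1) = v k 1 - v k 3)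
    (h2 : θ₂ (v k 2) = v k 1 - v k 2 - v k 3 + v k 4 - v k 5)
    (h3 : θ₂ (v k 3) = v k 1 - v k 2 + v k 4)
    (h4k : ∀ m : ℕ+, θ₂ (v k (4 * m)) = v k (4 * m + 2))
    (h4k1 : ∀ m : ℕ+, θ₂ (v k (4 * m + 1)) =
      -v k 1 + v k 2 + ∑ j ∈ Finset.Icc (2 : ℕ+) (2 * m + 1),
        ((-1 : k) ^ ((j : ℕ) - 1)) • v k (2 * j))
    (h4k2 : ∀ m : ℕ+, θ₂ (v k (4 * m + 2)) = 0)
    (h4k3 : ∀ m : ℕ+, θ₂ (v k (4 * m + 3)) =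
      v k 1 - v k 2 + (∑ j ∈ Finset.Icc (2 : ℕ+) (2 * m + 2),
        ((-1 : k) ^ (j : ℕ)) • v k (2 * j)) - v k (4 * m + 5)) :
    θ₂ ^ 6 = 0 := by
  -- values on small basis vectors
  have hv4 : θ₂ (v k 4) = v k 6 := by
    have h := h4k 1
    rwa [show (4*1+2:ℕ+) = 6 by decide, show (4*1:ℕ+) = 4 by decide] at h
  have hv6 : θ₂ (v k 6) = 0 := by
    have h := h4k2 1
    rwa [show (4*1+2:ℕ+) = 6 by decide] at h
  have hv5 : θ₂ (v k 5) = -v k 1 + v k 2 + (-v k 4 + v k 6) := by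
    have h := h4k1 1
    rw [show (4*1+1:ℕ+) = 5 by decide, show (2*1+1:ℕ+) = 3 by decide,
        show Finset.Icc (2:ℕ+) 3 = {2,3} by decide] at h
    rw [h, Finset.sum_insert (by decide), Finset.sum_singleton]
    norm_num [show (2*2:ℕ+) = 4 by decide, show (2*3:ℕ+) = 6 by decide,
      show ((2:ℕ+):ℕ) = 2 from rfl, show ((3:ℕ+):ℕ) = 3 from rfl]
  -- θ₂ kills v (2*j) in two steps, for j ≥ 2
  have hkill : ∀ j : ℕ+, 2 ≤ j → θ₂ (θ₂ (v k (2*j))) = 0 := by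
    intro j hj
    obtain ⟨t, ht | ht⟩ := pnat_parity j hj
    · have e : 2*j = 4*t := by apply PNat.coe_injective; push_cast [ht]; ring
      rw [e, h4k t, h4k2 t]
    · have e : 2*j = 4*t+2 := by apply PNat.coe_injective; push_cast [ht]; ring
      rw [e, h4k2 t, map_zero]
  have hSkill : ∀ (b : ℕ+) (c : ℕ+ → k),
      θ₂ (θ₂ (∑ j ∈ Finset.Icc (2:ℕ+) b, c j • v k (2*j))) = 0 := by
    intro b c
    simp only [map_sum, map_smul]
    refine Finset.sum_eq_zero fun j hj => ?_
    rw [hkill j (Finset.mem_Icc.mp hj).1, smul_zero]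
  -- reduce to basis vectors
  apply Finsupp.lhom_ext (fun a b => ?_)
  have hsingle : Finsupp.single a b = b • v k a := by simp [v, Finsupp.smul_single]
  rw [hsingle, map_smul,
    show ((θ₂^6) (v k a)) = θ₂ (θ₂ (θ₂ (θ₂ (θ₂ (θ₂ (v k a)))))) from rfl]
  suffices hz : θ₂ (θ₂ (θ₂ (θ₂ (θ₂ (θ₂ (v k a)))))) = 0 by simp [hz]
  obtain h | h | h | ⟨m, h | h | h | h⟩ := pnat_decomp a <;> subst h
  · simp only [h1, h2, h3, hv4, hv5, hv6, map_add, map_sub, map_neg, map_zero]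
    abel
  · simp only [h1, h2, h3, hv4, hv5, hv6, map_add, map_sub, map_neg, map_zero]
    abel
  · simp only [h1, h2, h3, hv4, hv5, hv6, map_add, map_sub, map_neg, map_zero]
    abel
  · rw [h4k m, h4k2 m]; simp
  · rw [h4k1 m]
    have hS := hSkill (2*m+1) (fun j => (-1:k)^((j:ℕ)-1))
    simp only [h1, h2, h3, hv4, hv5, hv6, hS, map_add, map_sub, map_neg, map_zero]
    abel
  · rw [h4k2 m]; simp
  · rw [h4k3 m, show (4*m+5:ℕ+) = 4*(m+1)+1 by
      apply PNat.coe_injective; push_cast; ring]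
    have hT := hSkill (2*m+2) (fun j => (-1:k)^(j:ℕ))
    have hS := hSkill (2*(m+1)+1) (fun j => (-1:k)^((j:ℕ)-1))
    simp only [h1, h2, h3, hv4, hv5, hv6, hT, hS, h4k1 (m+1),
      map_add, map_sub, map_neg, map_zero]
    abel
end

section
/- Let V be a k-vector space with basis {v_j}_{j≥1}. Define θ₁ on this basis by: θ₁(v₁) = v₁ − v₂ + v₃; θ₁(v₂) = v₃ − v₄ + v₅; θ₁(v₃) = −v₁ + v₂ − v₄ + v₅; θ₁(v_{2k}) = v_{2k+1} − v_{2k+2} + v_{2k+3} for k ≥ 2; θ₁(v_{2k+1}) = (−1)^k v₁ + (−1)^{k+1} v₂ + Σ_{j=2}^{k} (−1)^{j+k} v_{2j} − v_{2k+2} + v_{2k+3} for k ≥ 2. Then θ₁² = 0, so θ₁ is nilpotent of order 2. -/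
lemma pnat_icc_insert (m : ℕ+) :
    Finset.Icc (2:ℕ+) (m+1) = insert (m+1) (Finset.Icc 2 m) := by
  ext j
  have hj : 1 ≤ (j:ℕ) := j.property
  have hm : 1 ≤ (m:ℕ) := m.property
  simp only [Finset.mem_Icc, Finset.mem_insert, ← PNat.coe_le_coe, ← PNat.coe_inj]
  push_cast
  omega

lemma pnat_notmem (m : ℕ+) : (m+1 : ℕ+) ∉ Finset.Icc (2:ℕ+) m := by
  have hm : 1 ≤ (m:ℕ) := m.property
  simp only [Finset.mem_Icc, ← PNat.coe_le_coe]
  push_cast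
  omega

lemma sum_rec {k : Type*} [Field k] (m : ℕ+) :
    (∑ j ∈ Finset.Icc (2 : ℕ+) (m+1), ((-1 : k) ^ ((j : ℕ) + ((m+1 : ℕ+) : ℕ))) • v k (2 * j))
      = -(∑ j ∈ Finset.Icc (2 : ℕ+) m, ((-1 : k) ^ ((j : ℕ) + (m : ℕ))) • v k (2 * j))
        + v k (2 * m + 2) := by
  rw [pnat_icc_insert, Finset.sum_insert (pnat_notmem m)]
  have hc : ((m+1 : ℕ+) : ℕ) = (m:ℕ) + 1 := by push_cast; ring
  have htop : ((-1 : k) ^ (((m+1:ℕ+) : ℕ) + ((m+1 : ℕ+) : ℕ))) = 1 := by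
    rw [hc]
    exact Even.neg_one_pow ⟨(m:ℕ)+1, by ring⟩
  have h2 : (2:ℕ+) * (m+1) = 2*m+2 := by rw [mul_add, mul_one]
  rw [htop, one_smul, h2]
  have hrest : ∀ j ∈ Finset.Icc (2:ℕ+) m,
      ((-1 : k) ^ ((j : ℕ) + ((m+1 : ℕ+) : ℕ))) • v k (2 * j)
        = -(((-1 : k) ^ ((j : ℕ) + (m : ℕ))) • v k (2 * j)) := by
    intro j _
    rw [hc, ← add_assoc, pow_succ, mul_neg_one, neg_smul]
  rw [Finset.sum_congr rfl hrest, Finset.sum_neg_distrib]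
  abel

theorem theta1_in_v_basis_nilpotent_of_order_two {k : Type*} [Field k]
    (θ₁ : (ℕ+ →₀ k) →ₗ[k] (ℕ+ →₀ k))
    (h1 : θ₁ (v k 1) = v k 1 - v k 2 + v k 3)
    (h2 : θ₁ (v k 2) = v k 3 - v k 4 + v k 5)
    (h3 : θ₁ (v k 3) = -v k 1 + v k 2 - v k 4 + v k 5)
    (heven : ∀ m : ℕ+, 2 ≤ m →
      θ₁ (v k (2 * m)) = v k (2 * m + 1) - v k (2 * m + 2) + v k (2 * m + 3))
    (hodd : ∀ m : ℕ+, 2 ≤ m →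
      θ₁ (v k (2 * m + 1)) =
        ((-1 : k) ^ (m : ℕ)) • v k 1 + ((-1 : k) ^ ((m : ℕ) + 1)) • v k 2 +
        (∑ j ∈ Finset.Icc (2 : ℕ+) m, ((-1 : k) ^ ((j : ℕ) + (m : ℕ))) • v k (2 * j)) -
        v k (2 * m + 2) + v k (2 * m + 3)) :
    θ₁ ^ 2 = 0 := by
  have hm1 : ∀ m : ℕ+, 2 ≤ m → (2:ℕ+) ≤ m + 1 := by
    intro m hm
    calc (2:ℕ+) ≤ m := hm
    _ ≤ m + 1 := le_of_lt (PNat.lt_add_right m 1)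
  -- the key recurrence: θ₁ v_{2(m+1)+1} = -θ₁ v_{2m+1} + θ₁ v_{2m+2}
  have hL : ∀ m : ℕ+, 2 ≤ m →
      θ₁ (v k (2 * (m+1) + 1)) = -θ₁ (v k (2 * m + 1)) + θ₁ (v k (2 * m + 2)) := by
    intro m hm
    have e2 : (2:ℕ+) * (m+1) = 2*m+2 := by rw [mul_add, mul_one]
    have e3 : (2:ℕ+) * (m+1) + 1 = 2*m+3 := by rw [e2, add_assoc]; rfl
    have e4 : (2:ℕ+) * (m+1) + 2 = 2*m+4 := by rw [e2, add_assoc]; rfl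
    have e5 : (2:ℕ+) * (m+1) + 3 = 2*m+5 := by rw [e2, add_assoc]; rfl
    have hc : ((m+1 : ℕ+) : ℕ) = (m:ℕ) + 1 := by push_cast; ring
    have hOm1 := hodd (m+1) (hm1 m hm)
    rw [sum_rec, hc, e3, e4, e5] at hOm1
    have hOm := hodd m hm
    have hEm1 := heven (m+1) (hm1 m hm)
    rw [e3, e4, e5, e2] at hEm1
    rw [e3, hOm1, hOm, hEm1]
    have p1 : ((-1:k) ^ ((m:ℕ) + 1)) = -((-1:k) ^ (m:ℕ)) := by
      rw [pow_succ, mul_neg_one]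
    have p2 : ((-1:k) ^ ((m:ℕ) + 1 + 1)) = (-1:k) ^ (m:ℕ) := by
      rw [pow_succ, pow_succ, mul_neg_one, mul_neg_one, neg_neg]
    rw [p1, p2]
    module
  -- θ₁² kills even basis vectors
  have hE : ∀ m : ℕ+, 2 ≤ m → θ₁ (θ₁ (v k (2 * m))) = 0 := by
    intro m hm
    have e3 : (2:ℕ+) * (m+1) + 1 = 2*m+3 := by rw [mul_add, mul_one, add_assoc]; rfl
    have hL' := hL m hm
    rw [e3] at hL'
    rw [heven m hm, map_add, map_sub, hL']
    abel
  -- explicit values on v₄, v₅, v₆, and θ₁ v₇ relation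
  have t4 : θ₁ (v k 4) = v k 5 - v k 6 + v k 7 := by
    have h4 := heven 2 le_rfl
    rwa [show (2*2+1 : ℕ+) = 5 from rfl, show (2*2+2 : ℕ+) = 6 from rfl,
      show (2*2+3 : ℕ+) = 7 from rfl, show (2*2 : ℕ+) = 4 from rfl] at h4
  have t5 : θ₁ (v k 5) = v k 1 - v k 2 + v k 4 - v k 6 + v k 7 := by
    have h5 := hodd 2 le_rfl
    rw [show Finset.Icc (2:ℕ+) 2 = {2} from Finset.Icc_self 2,
      Finset.sum_singleton] at h5
    rw [show (2*2+1 : ℕ+) = 5 from rfl, show (2*2+2 : ℕ+) = 6 from rfl,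
      show (2*2+3 : ℕ+) = 7 from rfl, show (2*2 : ℕ+) = 4 from rfl] at h5
    rw [show (((2:ℕ+)):ℕ) = 2 from rfl] at h5
    norm_num at h5
    rw [h5]
    abel
  have t6 : θ₁ (v k 6) = v k 7 - v k 8 + v k 9 := by
    have h6 := heven 3 (by norm_num)
    rwa [show (2*3+1 : ℕ+) = 7 from rfl, show (2*3+2 : ℕ+) = 8 from rfl,
      show (2*3+3 : ℕ+) = 9 from rfl, show (2*3 : ℕ+) = 6 from rfl] at h6
  have t7 : θ₁ (v k 7) = -θ₁ (v k 5) + θ₁ (v k 6) := by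
    have hL2 := hL 2 le_rfl
    rwa [show (2*(2+1)+1 : ℕ+) = 7 from rfl, show (2*2+1 : ℕ+) = 5 from rfl,
      show (2*2+2 : ℕ+) = 6 from rfl] at hL2
  -- θ₁² kills v₅
  have hv5 : θ₁ (θ₁ (v k 5)) = 0 := by
    rw [t5]
    simp only [map_add, map_sub, map_neg, t7, h1, h2, t4, t5, t6]
    abel
  -- θ₁² kills odd basis vectors, by induction
  have hO : ∀ m : ℕ+, 2 ≤ m → θ₁ (θ₁ (v k (2 * m + 1))) = 0 := by
    have key : ∀ n : ℕ, θ₁ (θ₁ (v k (2 * ((n+1) : ℕ).succPNat + 1))) = 0 := by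
      intro n
      induction n with
      | zero =>
        rw [show (((0:ℕ)+1).succPNat : ℕ+) = 2 from rfl,
          show (2*2+1 : ℕ+) = 5 from rfl]
        exact hv5
      | succ n ih =>
        set m : ℕ+ := ((n+1 : ℕ)).succPNat with hmdef
        have hm : 2 ≤ m := by
          rw [← PNat.coe_le_coe]
          simp [hmdef, Nat.succPNat]
        have hrw : (((n+1)+1 : ℕ)).succPNat = m + 1 := by
          apply PNat.coe_inj.mp
          simp [hmdef, Nat.succPNat]
          rfl
        rw [hrw]
        rw [hL m hm, map_add, map_neg, ih]
        have hE' := hE (m+1) (hm1 m hm)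
        rw [show (2:ℕ+) * (m+1) = 2*m+2 from by rw [mul_add, mul_one]] at hE'
        rw [hE']
        abel
    intro m hm
    obtain ⟨n, hn⟩ : ∃ n : ℕ, (m:ℕ) = n + 2 := by
      have h2m : 2 ≤ (m:ℕ) := hm
      exact ⟨(m:ℕ) - 2, by omega⟩
    have : m = ((n+1 : ℕ)).succPNat := by
      apply PNat.coe_inj.mp
      simp [Nat.succPNat, hn]
    rw [this]
    exact key n
  -- θ₁² kills all basis vectors
  have hzero : ∀ j : ℕ+, θ₁ (θ₁ (v k j)) = 0 := by
    intro j
    have hj : 1 ≤ (j:ℕ) := j.property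
    rcases Nat.even_or_odd (j:ℕ) with ⟨a, ha⟩ | ⟨a, ha⟩
    · -- even: j = 2a, a ≥ 1
      have ha1 : 1 ≤ a := by omega
      rcases eq_or_lt_of_le ha1 with h | h
      · -- a = 1 : j = 2
        have hj2 : j = 2 := by
          apply PNat.coe_inj.mp
          rw [show (((2:ℕ+)):ℕ) = 2 from rfl]
          omega
        rw [hj2, h2]
        simp only [map_add, map_sub, map_neg, h3, t4, t5]
        abel
      · -- a ≥ 2
        obtain ⟨b, hb⟩ : ∃ b : ℕ+, (b:ℕ) = a := ⟨⟨a, by omega⟩, rfl⟩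
        have hj2 : j = 2 * b := by
          apply PNat.coe_inj.mp
          rw [PNat.mul_coe, show (((2:ℕ+)):ℕ) = 2 from rfl]
          omega
        rw [hj2]
        exact hE b (by rw [← PNat.coe_le_coe]; rw [show (((2:ℕ+)):ℕ) = 2 from rfl]; omega)
    · -- odd: j = 2a+1
      rcases Nat.lt_or_ge a 2 with h | h
      · interval_cases a
        · -- j = 1
          have hj1 : j = 1 := by
            apply PNat.coe_inj.mp
            rw [show (((1:ℕ+)):ℕ) = 1 from rfl]
            omega
          rw [hj1, h1]
          simp only [map_add, map_sub, map_neg, h1, h2, h3]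
          abel
        · -- j = 3
          have hj3 : j = 3 := by
            apply PNat.coe_inj.mp
            rw [show (((3:ℕ+)):ℕ) = 3 from rfl]
            omega
          rw [hj3, h3]
          simp only [map_add, map_sub, map_neg, h1, h2, t4, t5]
          abel
      · obtain ⟨b, hb⟩ : ∃ b : ℕ+, (b:ℕ) = a := ⟨⟨a, by omega⟩, rfl⟩
        have hj2 : j = 2 * b + 1 := by
          apply PNat.coe_inj.mp
          rw [PNat.add_coe, PNat.mul_coe, show (((2:ℕ+)):ℕ) = 2 from rfl,
            show (((1:ℕ+)):ℕ) = 1 from rfl]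
          omega
        rw [hj2]
        exact hO b (by rw [← PNat.coe_le_coe]; rw [show (((2:ℕ+)):ℕ) = 2 from rfl]; omega)
  -- conclude
  apply Finsupp.lhom_ext
  intro a b
  have hsingle : (Finsupp.single a b : ℕ+ →₀ k) = b • v k a := by
    simp [v, Finsupp.smul_single]
  rw [pow_two]
  rw [Module.End.mul_apply, hsingle, map_smul, map_smul, hzero]
  simp
end
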